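/- Let G be a tree, i.e. a connected acyclic simple graph, and let n, n' be two vertices of G. Let P be the subgraph of G formed by the vertices and edges of the (unique) path in G joining n and n'. Then dist_C(n, n'; G) = dist_C(n, n'; P): the Connes distance in the whole tree equals the Connes distance computed in the minimal path joining the two vertices. -/

import Mathlib

/-- A vertex function `f` is admissible for `G` if `∑_{j ~ i} (f j - f i)² ≤ 1` at every
vertex `i`. -/
def Admissible {V : Type*} (G : SimpleGraph V) [∀ v, Fintype (G.neighborSet v)]
    (f : V → ℝ) : Prop :=
  ∀ i : V, ∑ j ∈ G.neighborFinset i, (f j - f i) ^ 2 ≤ 1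

/-- The Connes distance: the supremum of `|f n' - f n|` over admissible functions `f`. -/
noncomputable def distC {V : Type*} (G : SimpleGraph V) [∀ v, Fintype (G.neighborSet v)]
    (n n' : V) : ℝ :=
  sSup {r : ℝ | ∃ f : V → ℝ, Admissible G f ∧ r = |f n' - f n|}

namespace Stmt14Aux

open SimpleGraph

variable {V : Type*}

/-- first element of the list satisfying `Q`, with default `d`. -/
noncomputable def firstMem (Q : V → Prop) : List V → V → V
  | [], d => d
  | a :: l, d => open Classical in if Q a then a else firstMem Q l d

theorem firstMem_cons (Q : V → Prop) (a : V) (l : List V) (d : V) :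
    firstMem Q (a :: l) d = open Classical in if Q a then a else firstMem Q l d := rfl

theorem firstMem_prop (Q : V → Prop) {l : List V} (d : V) (h : ∃ x ∈ l, Q x) :
    Q (firstMem Q l d) ∧ firstMem Q l d ∈ l := by
  classical
  induction l with
  | nil => simp at h
  | cons a l ih =>
    rw [firstMem_cons]
    by_cases ha : Q a
    · simp [ha]
    · simp only [ha, if_false]
      obtain ⟨x, hx, hQx⟩ := h
      rcases List.mem_cons.1 hx with rfl | hx
      · exact absurd hQx ha
      · obtain ⟨h1, h2⟩ := ih ⟨x, hx, hQx⟩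
        exact ⟨h1, List.mem_cons_of_mem _ h2⟩

theorem firstMem_append (Q : V → Prop) {l1 : List V} (l2 : List V) (d : V)
    (h : ∀ x ∈ l1, ¬ Q x) :
    firstMem Q (l1 ++ l2) d = firstMem Q l2 d := by
  classical
  induction l1 with
  | nil => rfl
  | cons a l ih =>
    rw [List.cons_append, firstMem_cons, if_neg (h a List.mem_cons_self)]
    exact ih fun x hx => h x (List.mem_cons_of_mem _ hx)

variable {G : SimpleGraph V}

/-- the unique path from `v` to `n` in a tree. -/
noncomputable def uq (hG : G.IsTree) (v n : V) : G.Walk v n :=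
  (hG.existsUnique_path v n).choose

theorem uq_isPath (hG : G.IsTree) (v n : V) : (uq hG v n).IsPath :=
  (hG.existsUnique_path v n).choose_spec.1

theorem uq_unique (hG : G.IsTree) {v n : V} (q : G.Walk v n) (hq : q.IsPath) :
    q = uq hG v n :=
  (hG.existsUnique_path v n).choose_spec.2 q hq

/-- the projection of `v` onto the path `p`: the first vertex of the unique path from
`v` to `n` which lies on `p`. -/
noncomputable def proj (hG : G.IsTree) {n n' : V} (p : G.Walk n n') (v : V) : V :=
  firstMem (· ∈ p.support) (uq hG v n).support n

theorem proj_mem (hG : G.IsTree) {n n' : V} (p : G.Walk n n') (v : V) :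
    proj hG p v ∈ p.support :=
  (firstMem_prop _ _ ⟨n, (uq hG v n).end_mem_support, p.start_mem_support⟩).1

theorem proj_eq_self (hG : G.IsTree) {n n' : V} (p : G.Walk n n') {v : V}
    (hv : v ∈ p.support) : proj hG p v = v := by
  classical
  rw [proj, (uq hG v n).support_eq_cons, firstMem_cons, if_pos hv]

/-- if `v` is on `p`, the unique path from `v` to `n` stays on `p`. -/
theorem uq_support_subset (hG : G.IsTree) {n n' : V} (p : G.Walk n n') (hp : p.IsPath)
    {v : V} (hv : v ∈ p.support) :
    (uq hG v n).support ⊆ p.support := by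
  classical
  have hq : ((p.takeUntil v hv).reverse).IsPath := (hp.takeUntil hv).reverse
  rw [← uq_unique hG _ hq]
  intro x hx
  rw [SimpleGraph.Walk.support_reverse, List.mem_reverse] at hx
  exact p.support_takeUntil_subset hv hx

/-- two distinct vertices cannot each lie on the other's path to `n`. -/
theorem not_both_mem (hG : G.IsTree) {n v w : V} (hvw : v ≠ w)
    (h1 : v ∈ (uq hG w n).support) :
    w ∉ (uq hG v n).support := by
  classical
  intro h2
  have hdrop : (uq hG w n).dropUntil v h1 = uq hG v n :=
    uq_unique hG _ ((uq_isPath hG w n).dropUntil h1)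
  have hspec := (uq hG w n).take_spec h1
  have hnd : (uq hG w n).support.Nodup := (uq_isPath hG w n).2
  rw [← hspec, SimpleGraph.Walk.support_append] at hnd
  have hw1 : w ∈ ((uq hG w n).takeUntil v h1).support := SimpleGraph.Walk.start_mem_support _
  have hw2 : w ∈ ((uq hG w n).dropUntil v h1).support.tail := by
    rw [hdrop]
    rw [(uq hG v n).support_eq_cons] at h2 ⊢
    rcases List.mem_cons.1 h2 with h | h
    · exact absurd h hvw.symm
    · simpa using h
  exact (List.disjoint_of_nodup_append hnd) hw1 hw2

/-- if `v, w` are both on the path `p` and adjacent in `G`, the edge is an edge of `p`. -/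
theorem edge_mem_of_both_mem (hG : G.IsTree) {n n' : V} (p : G.Walk n n') (hp : p.IsPath)
    {v w : V} (hadj : G.Adj v w)
    (hv : v ∈ p.support) (hw : w ∈ p.support) : s(v, w) ∈ p.edges := by
  classical
  obtain ⟨r, hr, hre⟩ : ∃ r : G.Walk v w, r.IsPath ∧ ∀ e ∈ r.edges, e ∈ p.edges := by
    by_cases hwd : w ∈ (p.dropUntil v hv).support
    · refine ⟨(p.dropUntil v hv).takeUntil w hwd, (hp.dropUntil hv).takeUntil hwd, ?_⟩
      intro e he
      exact p.edges_dropUntil_subset hv ((p.dropUntil v hv).edges_takeUntil_subset hwd he)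
    · have hsplit : w ∈ (p.takeUntil v hv).support ∨ w ∈ (p.dropUntil v hv).support := by
        rw [← SimpleGraph.Walk.mem_support_append_iff, p.take_spec hv]
        exact hw
      have hwt : w ∈ ((p.takeUntil v hv).reverse).support := by
        rw [SimpleGraph.Walk.support_reverse, List.mem_reverse]
        exact hsplit.resolve_right hwd
      refine ⟨((p.takeUntil v hv).reverse).takeUntil w hwt,
        ((hp.takeUntil hv).reverse).takeUntil hwt, ?_⟩
      intro e he
      have := ((p.takeUntil v hv).reverse).edges_takeUntil_subset hwt he
      rw [SimpleGraph.Walk.edges_reverse, List.mem_reverse] at this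
      exact p.edges_takeUntil_subset hv this
  have hone : (SimpleGraph.Walk.cons hadj SimpleGraph.Walk.nil).IsPath := by
    simp [SimpleGraph.Walk.cons_isPath_iff, hadj.ne]
  have : r = SimpleGraph.Walk.cons hadj SimpleGraph.Walk.nil :=
    congrArg Subtype.val (hG.2.path_unique ⟨r, hr⟩ ⟨_, hone⟩)
  apply hre
  rw [this]
  simp

/-- Key lemma: adjacent vertices whose edge is not on `p` have the same projection. -/
theorem proj_eq_of_adj (hG : G.IsTree) {n n' : V} (p : G.Walk n n') (hp : p.IsPath)
    {v w : V} (hadj : G.Adj v w)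
    (he : s(v, w) ∉ p.edges) : proj hG p v = proj hG p w := by
  classical
  have main : ∀ v w : V, G.Adj v w → s(v, w) ∉ p.edges → w ∉ (uq hG v n).support →
      proj hG p w = proj hG p v := by
    intro v w hadj he hw
    have hcons : (SimpleGraph.Walk.cons hadj.symm (uq hG v n)).IsPath :=
      (uq_isPath hG v n).cons hw
    have huqw : uq hG w n = SimpleGraph.Walk.cons hadj.symm (uq hG v n) :=
      (uq_unique hG _ hcons).symm
    have hwp : w ∉ p.support := by
      intro hwp
      have hsub := uq_support_subset hG p hp hwp
      rw [huqw] at hsub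
      have hv : v ∈ p.support := by
        apply hsub
        rw [SimpleGraph.Walk.support_cons]
        exact List.mem_cons_of_mem _ (uq hG v n).start_mem_support
      exact he (edge_mem_of_both_mem hG p hp hadj hv hwp)
    rw [proj, huqw, SimpleGraph.Walk.support_cons]
    show firstMem _ ([w] ++ (uq hG v n).support) n = _
    rw [firstMem_append _ _ _ (by simpa using hwp)]
    rfl
  by_cases hw : w ∈ (uq hG v n).support
  · have hv : v ∉ (uq hG w n).support := fun hv => not_both_mem hG hadj.ne hv hw
    exact main w v hadj.symm (by rwa [Sym2.eq_swap]) hv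
  · exact (main v w hadj he hw).symm

end Stmt14Aux

open SimpleGraph Stmt14Aux in
/-- In a tree, the Connes distance between two vertices equals the Connes distance computed
in the subgraph formed by the (unique) path joining them. -/
theorem stmt_14 {V : Type*} (G : SimpleGraph V) [∀ v, Fintype (G.neighborSet v)]
    (hG : G.IsTree) (n n' : V) (p : G.Walk n n') (hp : p.IsPath)
    [∀ v : p.toSubgraph.verts, Fintype (p.toSubgraph.coe.neighborSet v)]
    (hn : n ∈ p.toSubgraph.verts) (hn' : n' ∈ p.toSubgraph.verts) :
    distC G n n' = distC p.toSubgraph.coe ⟨n, hn⟩ ⟨n', hn'⟩ := by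
  classical
  have hadj_iff : ∀ u v : V, p.toSubgraph.Adj u v ↔ s(u, v) ∈ p.edges := by
    intro u v
    rw [← SimpleGraph.Subgraph.mem_edgeSet, p.mem_edges_toSubgraph]
  have hmem : ∀ v : V, v ∈ p.toSubgraph.verts ↔ v ∈ p.support := fun v =>
    p.mem_verts_toSubgraph
  have hset : {r : ℝ | ∃ f : V → ℝ, Admissible G f ∧ r = |f n' - f n|}
      = {r : ℝ | ∃ f : ↥p.toSubgraph.verts → ℝ,
          Admissible p.toSubgraph.coe f ∧ r = |f ⟨n', hn'⟩ - f ⟨n, hn⟩|} := by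
    ext r
    constructor
    · rintro ⟨f, hf, rfl⟩
      refine ⟨fun v => f v.val, ?_, rfl⟩
      intro i
      have himg : ∑ j ∈ p.toSubgraph.coe.neighborFinset i, (f j.val - f i.val) ^ 2
          = ∑ j ∈ (p.toSubgraph.coe.neighborFinset i).image Subtype.val,
              (f j - f i.val) ^ 2 := by
        rw [Finset.sum_image]
        intro x _ y _ h
        exact Subtype.ext h
      have hle : ∑ j ∈ p.toSubgraph.coe.neighborFinset i, (f j.val - f i.val) ^ 2
          ≤ ∑ j ∈ G.neighborFinset i.val, (f j - f i.val) ^ 2 := by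
        rw [himg]
        apply Finset.sum_le_sum_of_subset_of_nonneg
        · intro x hx
          simp only [Finset.mem_image, SimpleGraph.mem_neighborFinset] at hx ⊢
          obtain ⟨j, hj, rfl⟩ := hx
          exact p.toSubgraph.adj_sub (by simpa using hj)
        · intro x _ _
          positivity
      exact hle.trans (hf i.val)
    · rintro ⟨f, hf, rfl⟩
      set F : V → ℝ := fun v => f ⟨proj hG p v, (hmem _).2 (proj_mem hG p v)⟩ with hF
      have hFs : ∀ (v : V) (hv : v ∈ p.toSubgraph.verts), F v = f ⟨v, hv⟩ := by
        intro v hv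
        simp only [hF]
        congr 1
        exact Subtype.ext (proj_eq_self hG p ((hmem v).1 hv))
      have hFeq : ∀ v w : V, G.Adj v w → s(v, w) ∉ p.edges → F v = F w := by
        intro v w hadj he
        simp only [hF]
        congr 1
        exact Subtype.ext (proj_eq_of_adj hG p hp hadj he)
      refine ⟨F, ?_, by rw [hFs n hn, hFs n' hn']⟩
      intro i
      by_cases hi : i ∈ p.support
      · have hiv : i ∈ p.toSubgraph.verts := (hmem i).2 hi
        have h1 : ∑ j ∈ G.neighborFinset i, (F j - F i) ^ 2
            = ∑ j ∈ (G.neighborFinset i).filter (fun j => s(i, j) ∈ p.edges),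
                (F j - F i) ^ 2 := by
          rw [Finset.sum_filter_of_ne]
          intro j hj hne
          by_contra he
          exact hne (by rw [hFeq i j (by simpa using hj) he]; ring)
        have h2 : ∑ j ∈ (G.neighborFinset i).filter (fun j => s(i, j) ∈ p.edges),
              (F j - F i) ^ 2
            = ∑ j ∈ p.toSubgraph.coe.neighborFinset ⟨i, hiv⟩,
                (f j - f ⟨i, hiv⟩) ^ 2 := by
          refine Finset.sum_bij (fun j hj =>
            (⟨j, (hmem j).2 (p.snd_mem_support_of_mem_edges
              (Finset.mem_filter.1 hj).2)⟩ : ↥p.toSubgraph.verts)) ?_ ?_ ?_ ?_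
          · intro j hj
            rw [SimpleGraph.mem_neighborFinset]
            simp only [SimpleGraph.Subgraph.coe_adj]
            exact (hadj_iff i j).2 (Finset.mem_filter.1 hj).2
          · intro a ha b hb hab
            simpa using congrArg Subtype.val hab
          · intro b hb
            rw [SimpleGraph.mem_neighborFinset] at hb
            simp only [SimpleGraph.Subgraph.coe_adj] at hb
            have hbe : s(i, b.val) ∈ p.edges := (hadj_iff _ _).1 hb
            refine ⟨b.val, Finset.mem_filter.2 ⟨?_, hbe⟩, ?_⟩
            · rw [SimpleGraph.mem_neighborFinset]
              exact hb.adj_sub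
            · exact Subtype.ext rfl
          · intro j hj
            have hjm : j ∈ p.support :=
              p.snd_mem_support_of_mem_edges (Finset.mem_filter.1 hj).2
            rw [hFs j ((hmem j).2 hjm), hFs i hiv]
        rw [h1, h2]
        exact hf ⟨i, hiv⟩
      · have hz : ∀ j ∈ G.neighborFinset i, (F j - F i) ^ 2 = 0 := by
          intro j hj
          have he : s(i, j) ∉ p.edges := fun he =>
            hi (p.fst_mem_support_of_mem_edges he)
          rw [hFeq i j (by simpa using hj) he]
          ring
        rw [Finset.sum_eq_zero hz]
        norm_num
  unfold distC
  rw [hset]
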